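/- Define A = ℤ[x,y,z]/(xy − x² − y², yz, x²y − xy², x³, y³, z³, y² + z², xy² + xz²) and B = ℤ[a,b,c]/(a², b(b+a), c(c−a+b)). Then the assignment a ↦ y + z, b ↦ −z, c ↦ x + z extends to a well-defined ring isomorphism B → A. -/
import Mathlib

set_option maxHeartbeats 1000000
set_option synthInstance.maxHeartbeats 100000

open MvPolynomial

noncomputable section StmtAux

def stmtIA : Ideal (MvPolynomial (Fin 3) ℤ) :=
  Ideal.span {X 0 * X 1 - (X 0) ^ 2 - (X 1) ^ 2, X 1 * X 2,
    (X 0) ^ 2 * X 1 - X 0 * (X 1) ^ 2, (X 0) ^ 3, (X 1) ^ 3, (X 2) ^ 3,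
    (X 1) ^ 2 + (X 2) ^ 2, X 0 * (X 1) ^ 2 + X 0 * (X 2) ^ 2}

def stmtIB : Ideal (MvPolynomial (Fin 3) ℤ) :=
  Ideal.span {(X 0) ^ 2, X 1 * (X 1 + X 0), X 2 * (X 2 - X 0 + X 1)}

/-- substitution a ↦ y+z, b ↦ -z, c ↦ x+z -/
def stmtφ : MvPolynomial (Fin 3) ℤ →ₐ[ℤ] (MvPolynomial (Fin 3) ℤ ⧸ stmtIA) :=
  (Ideal.Quotient.mkₐ ℤ stmtIA).comp (aeval ![X 1 + X 2, -X 2, X 0 + X 2])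

/-- substitution x ↦ c+b, y ↦ a+b, z ↦ -b -/
def stmtψ : MvPolynomial (Fin 3) ℤ →ₐ[ℤ] (MvPolynomial (Fin 3) ℤ ⧸ stmtIB) :=
  (Ideal.Quotient.mkₐ ℤ stmtIB).comp (aeval ![X 2 + X 1, X 0 + X 1, -X 1])

lemma stmtφ_apply (p : MvPolynomial (Fin 3) ℤ) :
    stmtφ p = Ideal.Quotient.mk stmtIA (aeval ![X 1 + X 2, -X 2, X 0 + X 2] p) := rfl

lemma stmtψ_apply (p : MvPolynomial (Fin 3) ℤ) :
    stmtψ p = Ideal.Quotient.mk stmtIB (aeval ![X 2 + X 1, X 0 + X 1, -X 1] p) := rfl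

lemma stmt_memA (p : MvPolynomial (Fin 3) ℤ)
    (hp : p ∈ ({X 0 * X 1 - (X 0) ^ 2 - (X 1) ^ 2, X 1 * X 2,
      (X 0) ^ 2 * X 1 - X 0 * (X 1) ^ 2, (X 0) ^ 3, (X 1) ^ 3, (X 2) ^ 3,
      (X 1) ^ 2 + (X 2) ^ 2, X 0 * (X 1) ^ 2 + X 0 * (X 2) ^ 2} :
        Set (MvPolynomial (Fin 3) ℤ))) :
    Ideal.Quotient.mk stmtIA p = 0 :=
  Ideal.Quotient.eq_zero_iff_mem.2 (Ideal.subset_span hp)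

lemma stmt_memB (p : MvPolynomial (Fin 3) ℤ)
    (hp : p ∈ ({(X 0) ^ 2, X 1 * (X 1 + X 0), X 2 * (X 2 - X 0 + X 1)} :
        Set (MvPolynomial (Fin 3) ℤ))) :
    Ideal.Quotient.mk stmtIB p = 0 :=
  Ideal.Quotient.eq_zero_iff_mem.2 (Ideal.subset_span hp)

lemma stmt_hφ : ∀ p ∈ stmtIB, stmtφ p = 0 := by
  set x := Ideal.Quotient.mk stmtIA (X 0) with hx
  set y := Ideal.Quotient.mk stmtIA (X 1) with hy
  set z := Ideal.Quotient.mk stmtIA (X 2) with hz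
  have h1 : x * y - x ^ 2 - y ^ 2 = 0 := by
    rw [hx, hy, ← map_pow, ← map_pow, ← map_mul, ← map_sub, ← map_sub]
    exact stmt_memA _ (by simp)
  have h2 : y * z = 0 := by
    rw [hy, hz, ← map_mul]; exact stmt_memA _ (by simp)
  have h7 : y ^ 2 + z ^ 2 = 0 := by
    rw [hy, hz, ← map_pow, ← map_pow, ← map_add]; exact stmt_memA _ (by simp)
  suffices h : stmtIB ≤ RingHom.ker stmtφ.toRingHom from fun p hp => h hp
  rw [stmtIB, Ideal.span_le]
  rintro p hp
  simp only [Set.mem_insert_iff, Set.mem_singleton_iff] at hp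
  rcases hp with rfl | rfl | rfl <;>
    simp only [SetLike.mem_coe, RingHom.mem_ker, AlgHom.toRingHom_eq_coe, RingHom.coe_coe,
      stmtφ_apply, map_pow, map_mul, map_add, map_sub, map_neg, aeval_X,
      Matrix.cons_val_zero, Matrix.cons_val_one, Matrix.head_cons, Matrix.cons_val_two,
      Matrix.tail_cons, ← hx, ← hy, ← hz]
  · linear_combination h7 + 2 * h2
  · linear_combination -h2
  · linear_combination -h1 - h7 - h2

lemma stmt_hψ : ∀ p ∈ stmtIA, stmtψ p = 0 := by
  set a := Ideal.Quotient.mk stmtIB (X 0) with ha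
  set b := Ideal.Quotient.mk stmtIB (X 1) with hb
  set c := Ideal.Quotient.mk stmtIB (X 2) with hc
  have k1 : a ^ 2 = 0 := by
    rw [ha, ← map_pow]; exact stmt_memB _ (by simp)
  have k2 : b * (b + a) = 0 := by
    rw [ha, hb, ← map_add, ← map_mul]; exact stmt_memB _ (by simp)
  have k3 : c * (c - a + b) = 0 := by
    rw [ha, hb, hc, ← map_sub, ← map_add, ← map_mul]; exact stmt_memB _ (by simp)
  suffices h : stmtIA ≤ RingHom.ker stmtψ.toRingHom from fun p hp => h hp
  rw [stmtIA, Ideal.span_le]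
  rintro p hp
  simp only [Set.mem_insert_iff, Set.mem_singleton_iff] at hp
  rcases hp with rfl | rfl | rfl | rfl | rfl | rfl | rfl | rfl <;>
    simp only [SetLike.mem_coe, RingHom.mem_ker, AlgHom.toRingHom_eq_coe, RingHom.coe_coe,
      stmtψ_apply, map_pow, map_mul, map_add, map_sub, map_neg, aeval_X,
      Matrix.cons_val_zero, Matrix.cons_val_one, Matrix.head_cons, Matrix.cons_val_two,
      Matrix.tail_cons, ← ha, ← hb, ← hc]
  · linear_combination -k1 - k2 - k3
  · linear_combination -k2
  · linear_combination (-a) * k2 + (a + b) * k3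
  · linear_combination (b + c) * k1 + (c + b - a) * k2 + (a + 2 * b + c) * k3
  · linear_combination (a + b) * k1 + (2 * a + b) * k2
  · linear_combination (-b) * k1 + (a - b) * k2
  · linear_combination k1 + 2 * k2
  · linear_combination (c + b) * k1 + 2 * (c + b) * k2

def stmtF : (MvPolynomial (Fin 3) ℤ ⧸ stmtIB) →ₐ[ℤ] (MvPolynomial (Fin 3) ℤ ⧸ stmtIA) :=
  Ideal.Quotient.liftₐ stmtIB stmtφ stmt_hφ

def stmtG : (MvPolynomial (Fin 3) ℤ ⧸ stmtIA) →ₐ[ℤ] (MvPolynomial (Fin 3) ℤ ⧸ stmtIB) :=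
  Ideal.Quotient.liftₐ stmtIA stmtψ stmt_hψ

lemma stmtF_mk (p : MvPolynomial (Fin 3) ℤ) :
    stmtF (Ideal.Quotient.mk stmtIB p)
      = Ideal.Quotient.mk stmtIA (aeval ![X 1 + X 2, -X 2, X 0 + X 2] p) := rfl

lemma stmtG_mk (p : MvPolynomial (Fin 3) ℤ) :
    stmtG (Ideal.Quotient.mk stmtIA p)
      = Ideal.Quotient.mk stmtIB (aeval ![X 2 + X 1, X 0 + X 1, -X 1] p) := rfl

lemma stmt_hFG : stmtF.comp stmtG = AlgHom.id ℤ _ := by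
  apply Ideal.Quotient.algHom_ext
  apply MvPolynomial.algHom_ext
  intro i
  have : ∀ q : MvPolynomial (Fin 3) ℤ,
      (stmtF.comp stmtG) (Ideal.Quotient.mk stmtIA q)
        = Ideal.Quotient.mk stmtIA
            (aeval (R := ℤ) ![X 1 + X 2, -X 2, X 0 + X 2]
              (aeval (R := ℤ) ![X 2 + X 1, X 0 + X 1, -X 1] q)) := by
    intro q
    rw [AlgHom.comp_apply, stmtG_mk, stmtF_mk]
  simp only [AlgHom.comp_apply, Ideal.Quotient.mkₐ_eq_mk, AlgHom.id_apply]
  rw [← AlgHom.comp_apply, this]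
  refine congrArg _ ?_
  fin_cases i <;> simp

lemma stmt_hGF : stmtG.comp stmtF = AlgHom.id ℤ _ := by
  apply Ideal.Quotient.algHom_ext
  apply MvPolynomial.algHom_ext
  intro i
  have : ∀ q : MvPolynomial (Fin 3) ℤ,
      (stmtG.comp stmtF) (Ideal.Quotient.mk stmtIB q)
        = Ideal.Quotient.mk stmtIB
            (aeval (R := ℤ) ![X 2 + X 1, X 0 + X 1, -X 1]
              (aeval (R := ℤ) ![X 1 + X 2, -X 2, X 0 + X 2] q)) := by
    intro q
    rw [AlgHom.comp_apply, stmtF_mk, stmtG_mk]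
  simp only [AlgHom.comp_apply, Ideal.Quotient.mkₐ_eq_mk, AlgHom.id_apply]
  rw [← AlgHom.comp_apply, this]
  refine congrArg _ ?_
  fin_cases i <;> simp

end StmtAux

/-- With `A = ℤ[x,y,z]/(xy - x² - y², yz, x²y - xy², x³, y³, z³, y² + z²,
xy² + xz²)` and `B = ℤ[a,b,c]/(a², b(b+a), c(c-a+b))`, the assignment
`a ↦ y + z`, `b ↦ -z`, `c ↦ x + z` extends to a ring isomorphism `B ≃ A`. -/
theorem stmt_6 :
    letI IA : Ideal (MvPolynomial (Fin 3) ℤ) :=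
      Ideal.span {X 0 * X 1 - (X 0) ^ 2 - (X 1) ^ 2, X 1 * X 2,
        (X 0) ^ 2 * X 1 - X 0 * (X 1) ^ 2, (X 0) ^ 3, (X 1) ^ 3, (X 2) ^ 3,
        (X 1) ^ 2 + (X 2) ^ 2, X 0 * (X 1) ^ 2 + X 0 * (X 2) ^ 2}
    letI IB : Ideal (MvPolynomial (Fin 3) ℤ) :=
      Ideal.span {(X 0) ^ 2, X 1 * (X 1 + X 0), X 2 * (X 2 - X 0 + X 1)}
    letI x := Ideal.Quotient.mk IA (X 0)
    letI y := Ideal.Quotient.mk IA (X 1)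
    letI z := Ideal.Quotient.mk IA (X 2)
    letI a := Ideal.Quotient.mk IB (X 0)
    letI b := Ideal.Quotient.mk IB (X 1)
    letI c := Ideal.Quotient.mk IB (X 2)
    ∃ e : (MvPolynomial (Fin 3) ℤ ⧸ IB) ≃+* (MvPolynomial (Fin 3) ℤ ⧸ IA),
      e a = y + z ∧ e b = -z ∧ e c = x + z := by
  show ∃ e : (MvPolynomial (Fin 3) ℤ ⧸ stmtIB) ≃+* (MvPolynomial (Fin 3) ℤ ⧸ stmtIA),
      e (Ideal.Quotient.mk stmtIB (X 0))
          = Ideal.Quotient.mk stmtIA (X 1) + Ideal.Quotient.mk stmtIA (X 2)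
        ∧ e (Ideal.Quotient.mk stmtIB (X 1)) = -Ideal.Quotient.mk stmtIA (X 2)
        ∧ e (Ideal.Quotient.mk stmtIB (X 2))
          = Ideal.Quotient.mk stmtIA (X 0) + Ideal.Quotient.mk stmtIA (X 2)
  refine ⟨(AlgEquiv.ofAlgHom stmtF stmtG stmt_hFG stmt_hGF).toRingEquiv, ?_, ?_, ?_⟩ <;>
    · rw [show ∀ u, (AlgEquiv.ofAlgHom stmtF stmtG stmt_hFG stmt_hGF).toRingEquiv u = stmtF u
        from fun _ => rfl, stmtF_mk]
      simp
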